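/- Every orientation-preserving homeomorphism of the closed interval [0,1] can be written as a single commutator of two orientation-preserving homeomorphisms of [0,1]. -/

import Mathlib

open Set Filter
noncomputable section

lemma perm_inv_strictMono (e : Equiv.Perm ℝ) (he : StrictMono ⇑e) : StrictMono ⇑e⁻¹ := by
  intro x y hxy
  have := he.lt_iff_lt (a := e⁻¹ x) (b := e⁻¹ y)
  rw [Equiv.Perm.inv_def, Equiv.apply_symm_apply, Equiv.apply_symm_apply] at this
  exact this.mp hxy

lemma perm_pow_strictMono (e : Equiv.Perm ℝ) (he : StrictMono ⇑e) (n : ℕ) :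
    StrictMono ⇑(e ^ n) := by
  induction n with
  | zero => simpa using strictMono_id
  | succ k ih =>
    have : (e ^ (k+1) : Equiv.Perm ℝ) = e ^ k * e := pow_succ e k
    rw [this]
    intro x y hxy
    simpa [Equiv.Perm.mul_apply] using ih (he hxy)

lemma perm_zpow_strictMono (e : Equiv.Perm ℝ) (he : StrictMono ⇑e) (n : ℤ) :
    StrictMono ⇑(e ^ n) := by
  cases n with
  | ofNat m => rw [Int.ofNat_eq_natCast, zpow_natCast]; exact perm_pow_strictMono e he m
  | negSucc m =>
    rw [zpow_negSucc]
    exact perm_inv_strictMono _ (perm_pow_strictMono e he (m+1))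

lemma perm_zpow_add (e : Equiv.Perm ℝ) (m n : ℤ) (x : ℝ) :
    (e ^ (m + n)) x = (e ^ m) ((e ^ n) x) := by
  rw [zpow_add, Equiv.Perm.mul_apply]

lemma perm_zpow_cancel (e : Equiv.Perm ℝ) (n : ℤ) (y : ℝ) : (e ^ n) ((e ^ (-n)) y) = y := by
  rw [← perm_zpow_add]; simp

lemma perm_zpow_cancel' (e : Equiv.Perm ℝ) (n : ℤ) (y : ℝ) : (e ^ (-n)) ((e ^ n) y) = y := by
  rw [← perm_zpow_add]; simp

lemma perm_zpow_succ (a : ℝ ≃o ℝ) (n : ℤ) (x : ℝ) :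
    (a.toEquiv ^ (n + 1)) x = a ((a.toEquiv ^ n) x) := by
  rw [show n + 1 = 1 + n from add_comm n 1, perm_zpow_add, zpow_one]; rfl

lemma orbit_strictAnti (a : ℝ ≃o ℝ) (ha : ∀ x, a x < x) (x : ℝ) :
    StrictAnti (fun n : ℤ => (a.toEquiv ^ n) x) := by
  apply strictAnti_int_of_succ_lt
  intro n
  show (a.toEquiv ^ (n + 1)) x < (a.toEquiv ^ n) x
  rw [perm_zpow_succ]
  exact ha _

lemma orbit_le (a : ℝ ≃o ℝ) (ha : ∀ x, a x < x) (x y : ℝ) :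
    ∃ n : ℤ, (a.toEquiv ^ n) x ≤ y := by
  by_contra hc
  push_neg at hc
  set s : ℤ → ℝ := fun n => (a.toEquiv ^ n) x with hs
  have hanti := orbit_strictAnti a ha x
  have hmono : Antitone fun k : ℕ => s k := fun i j hij => hanti.antitone (by exact_mod_cast hij)
  have hbdd : BddBelow (Set.range fun k : ℕ => s k) := ⟨y, by rintro _ ⟨k, rfl⟩; exact (hc _).le⟩
  have htend : Filter.Tendsto (fun k : ℕ => s k) Filter.atTop (nhds (⨅ k : ℕ, s k)) :=
    tendsto_atTop_ciInf hmono hbdd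
  have h2 : Filter.Tendsto (fun k : ℕ => s ((k : ℤ) + 1)) Filter.atTop (nhds (⨅ k : ℕ, s k)) := by
    have h := htend.comp (Filter.tendsto_add_atTop_nat 1)
    have he : (fun k : ℕ => s ((k : ℤ) + 1)) = (fun k : ℕ => s k) ∘ (fun k : ℕ => k + 1) := by
      funext k
      show s ((k : ℤ) + 1) = s ((k + 1 : ℕ) : ℤ)
      norm_cast
    rw [he]
    exact h
  have h3 : Filter.Tendsto (fun k : ℕ => a (s k)) Filter.atTop (nhds (a (⨅ k : ℕ, s k))) :=
    (a.continuous.tendsto _).comp htend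
  have heq : (fun k : ℕ => a (s k)) = fun k : ℕ => s ((k : ℤ) + 1) := by
    funext k
    rw [hs]
    exact (perm_zpow_succ a k x).symm
  rw [heq] at h3
  exact absurd (tendsto_nhds_unique h3 h2) (ne_of_lt (ha _))

lemma orbit_ge (a : ℝ ≃o ℝ) (ha : ∀ x, a x < x) (x y : ℝ) :
    ∃ n : ℤ, y ≤ (a.toEquiv ^ n) x := by
  by_contra hc
  push_neg at hc
  set s : ℤ → ℝ := fun n => (a.toEquiv ^ n) x with hs
  have hanti := orbit_strictAnti a ha x
  have hmono : Monotone fun k : ℕ => s (-k) := fun i j hij => hanti.antitone (by exact_mod_cast neg_le_neg (Int.ofNat_le.mpr hij))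
  have hbdd : BddAbove (Set.range fun k : ℕ => s (-k)) := ⟨y, by rintro _ ⟨k, rfl⟩; exact (hc _).le⟩
  have htend : Filter.Tendsto (fun k : ℕ => s (-k)) Filter.atTop (nhds (⨆ k : ℕ, s (-k))) :=
    tendsto_atTop_ciSup hmono hbdd
  have h3 : Filter.Tendsto (fun k : ℕ => a (s (-(k + 1 : ℕ)))) Filter.atTop
      (nhds (a (⨆ k : ℕ, s (-k)))) :=
    (a.continuous.tendsto _).comp (htend.comp (Filter.tendsto_add_atTop_nat 1))
  have heq : (fun k : ℕ => a (s (-(k + 1 : ℕ)))) = fun k : ℕ => s (-k) := by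
    funext k
    rw [hs]
    have : (-(k + 1 : ℕ) : ℤ) + 1 = -k := by push_cast; ring
    rw [← this]
    exact (perm_zpow_succ a _ x).symm
  rw [heq] at h3
  exact absurd (tendsto_nhds_unique h3 htend) (ne_of_lt (ha _))

lemma exists_fund (a : ℝ ≃o ℝ) (ha : ∀ x, a x < x) (x : ℝ) :
    ∃ n : ℤ, (a.toEquiv ^ n) x ≤ 0 ∧ 0 < (a.toEquiv ^ (n - 1)) x := by
  classical
  obtain ⟨n₀, hn₀⟩ := orbit_le a ha x 0
  obtain ⟨n₁, hn₁⟩ := orbit_ge a ha x 1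
  have hanti := orbit_strictAnti a ha x
  have hbdd : ∃ lb : ℤ, ∀ z : ℤ, (a.toEquiv ^ z) x ≤ 0 → lb ≤ z := by
    refine ⟨n₁ + 1, fun z hz => ?_⟩
    by_contra hzc
    push_neg at hzc
    have hzn : z ≤ n₁ := by omega
    have : (a.toEquiv ^ n₁) x ≤ (a.toEquiv ^ z) x := hanti.antitone hzn
    linarith
  obtain ⟨lb, hlb1, hlb2⟩ := Int.exists_least_of_bdd hbdd ⟨n₀, hn₀⟩
  refine ⟨lb, hlb1, ?_⟩
  by_contra hc
  push_neg at hc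
  exact absurd (hlb2 _ hc) (by omega)

lemma fund_unique (a : ℝ ≃o ℝ) (ha : ∀ x, a x < x) (x : ℝ) {n m : ℤ}
    (h1 : (a.toEquiv ^ n) x ≤ 0) (h2 : 0 < (a.toEquiv ^ (n - 1)) x)
    (h3 : (a.toEquiv ^ m) x ≤ 0) (h4 : 0 < (a.toEquiv ^ (m - 1)) x) : n = m := by
  have hanti := orbit_strictAnti a ha x
  rcases lt_trichotomy n m with h | h | h
  · have : (a.toEquiv ^ (m - 1)) x ≤ (a.toEquiv ^ n) x := hanti.antitone (by omega)
    linarith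
  · exact h
  · have : (a.toEquiv ^ (n - 1)) x ≤ (a.toEquiv ^ m) x := hanti.antitone (by omega)
    linarith

lemma perm_zpow_apply_iso (a : ℝ ≃o ℝ) (n : ℤ) (x : ℝ) :
    (a.toEquiv ^ n) (a x) = (a.toEquiv ^ (n + 1)) x := by
  have h : a x = (a.toEquiv ^ (1:ℤ)) x := by rw [zpow_one]; rfl
  rw [h, ← perm_zpow_add]

lemma exists_conj (a b : ℝ ≃o ℝ) (ha : ∀ x, a x < x) (hb : ∀ x, b x < x) :
    ∃ φ : ℝ ≃o ℝ, ∀ x, φ (a x) = b (φ x) := by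
  classical
  have haS : StrictMono ⇑a.toEquiv := a.strictMono
  have hbS : StrictMono ⇑b.toEquiv := b.strictMono
  set a0 := a 0 with ha0
  set b0 := b 0 with hb0
  have ha0neg : a0 < 0 := ha 0
  have hb0neg : b0 < 0 := hb 0
  have ha0' : a0 ≠ 0 := ne_of_lt ha0neg
  have hb0' : b0 ≠ 0 := ne_of_lt hb0neg
  set A : ℝ → ℝ := fun t => b0 / a0 * t with hA
  have hslope : 0 < b0 / a0 := div_pos_of_neg_of_neg hb0neg ha0neg
  have hAmono : StrictMono A := fun u v huv => by
    dsimp only [A]; exact (mul_lt_mul_iff_right₀ hslope).mpr huv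
  have hA0 : A 0 = 0 := mul_zero _
  have hAa0 : A a0 = b0 := by
    dsimp only [A]; field_simp
  set B : ℝ → ℝ := fun t => a0 / b0 * t with hB
  have hAB : ∀ t, A (B t) = t := by
    intro t; dsimp only [A, B]; field_simp
  have hB0 : B 0 = 0 := mul_zero _
  have hBb0 : B b0 = a0 := by
    dsimp only [B]; field_simp
  have hBmono : StrictMono B := fun u v huv => by
    dsimp only [B]
    exact (mul_lt_mul_iff_right₀ (div_pos_of_neg_of_neg ha0neg hb0neg)).mpr huv
  -- the integer-valued "level" functions
  have hNex := exists_fund a ha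
  set N : ℝ → ℤ := fun x => (hNex x).choose with hN
  have hN1 : ∀ x, (a.toEquiv ^ N x) x ≤ 0 := fun x => (hNex x).choose_spec.1
  have hN2 : ∀ x, 0 < (a.toEquiv ^ (N x - 1)) x := fun x => (hNex x).choose_spec.2
  have hNuniq : ∀ (x : ℝ) (n : ℤ),
      (a.toEquiv ^ n) x ≤ 0 → 0 < (a.toEquiv ^ (n - 1)) x → N x = n :=
    fun x n h1 h2 => fund_unique a ha x (hN1 x) (hN2 x) h1 h2
  have hMex := exists_fund b hb
  set M : ℝ → ℤ := fun y => (hMex y).choose with hM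
  have hM1 : ∀ y, (b.toEquiv ^ M y) y ≤ 0 := fun y => (hMex y).choose_spec.1
  have hM2 : ∀ y, 0 < (b.toEquiv ^ (M y - 1)) y := fun y => (hMex y).choose_spec.2
  have hMuniq : ∀ (y : ℝ) (m : ℤ),
      (b.toEquiv ^ m) y ≤ 0 → 0 < (b.toEquiv ^ (m - 1)) y → M y = m :=
    fun y m h1 h2 => fund_unique b hb y (hM1 y) (hM2 y) h1 h2
  -- lower bound on the fundamental-domain representative
  have hNlow : ∀ x, a0 < (a.toEquiv ^ N x) x := by
    intro x
    have h1 : (a.toEquiv ^ (N x - 1 + 1)) x = a ((a.toEquiv ^ (N x - 1)) x) :=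
      perm_zpow_succ a _ x
    rw [show N x - 1 + 1 = N x by ring] at h1
    rw [h1, ha0]
    exact a.strictMono (hN2 x)
  -- the conjugating map
  set φf : ℝ → ℝ := fun x => (b.toEquiv ^ (-N x)) (A ((a.toEquiv ^ N x) x)) with hφf
  have hrange : ∀ x, b0 < A ((a.toEquiv ^ N x) x) ∧ A ((a.toEquiv ^ N x) x) ≤ 0 := by
    intro x
    constructor
    · rw [← hAa0]; exact hAmono (hNlow x)
    · rw [← hA0]; exact (hAmono.le_iff_le).mpr (hN1 x)
  have hQN : ∀ x, (b.toEquiv ^ N x) (φf x) = A ((a.toEquiv ^ N x) x) := by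
    intro x
    dsimp only [φf]
    exact perm_zpow_cancel b.toEquiv (N x) _
  have hMφ : ∀ x, M (φf x) = N x := by
    intro x
    apply hMuniq
    · rw [hQN x]; exact (hrange x).2
    · have hsucc : (b.toEquiv ^ (N x - 1 + 1)) (φf x) = b ((b.toEquiv ^ (N x - 1)) (φf x)) :=
        perm_zpow_succ b _ _
      rw [show N x - 1 + 1 = N x by ring] at hsucc
      have : b 0 < b ((b.toEquiv ^ (N x - 1)) (φf x)) := by
        rw [← hsucc, hQN x, ← hb0]
        exact (hrange x).1
      exact b.strictMono.lt_iff_lt.mp this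
  -- equivariance
  have hNa : ∀ x, N (a x) = N x - 1 := by
    intro x
    apply hNuniq
    · rw [perm_zpow_apply_iso, show N x - 1 + 1 = N x by ring]
      exact hN1 x
    · rw [perm_zpow_apply_iso, show N x - 1 - 1 + 1 = N x - 1 by ring]
      exact hN2 x
  have hequiv : ∀ x, φf (a x) = b (φf x) := by
    intro x
    have h1 : φf (a x) = (b.toEquiv ^ (-(N x - 1))) (A ((a.toEquiv ^ (N x - 1)) (a x))) := by
      dsimp only [φf]; rw [hNa x]
    have h2 : (a.toEquiv ^ (N x - 1)) (a x) = (a.toEquiv ^ N x) x := by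
      rw [perm_zpow_apply_iso, show N x - 1 + 1 = N x by ring]
    rw [h1, h2, show -(N x - 1) = 1 + -N x by ring, perm_zpow_add, zpow_one]
    rfl
  -- monotonicity of N
  have hNmono : ∀ {x y : ℝ}, x < y → N x ≤ N y := by
    intro x y hxy
    by_contra hc
    push_neg at hc
    have h1 : (a.toEquiv ^ (N x - 1)) y ≤ (a.toEquiv ^ N y) y :=
      (orbit_strictAnti a ha y).antitone (by omega)
    have h2 : (a.toEquiv ^ (N x - 1)) x < (a.toEquiv ^ (N x - 1)) y :=
      perm_zpow_strictMono a.toEquiv haS _ hxy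
    have := hN1 y
    have := hN2 x
    linarith
  -- strict monotonicity of φf
  have hφmono : StrictMono φf := by
    intro x y hxy
    rcases eq_or_lt_of_le (hNmono hxy) with heq | hlt
    · have hx : φf x = (b.toEquiv ^ (-N x)) (A ((a.toEquiv ^ N x) x)) := rfl
      have hy : φf y = (b.toEquiv ^ (-N x)) (A ((a.toEquiv ^ N x) y)) := by
        dsimp only [φf]; rw [← heq]
      rw [hx, hy]
      exact perm_zpow_strictMono b.toEquiv hbS _
        (hAmono (perm_zpow_strictMono a.toEquiv haS _ hxy))
    · have key : (b.toEquiv ^ N y) (φf x) < (b.toEquiv ^ N y) (φf y) := by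
        have hRHS : b0 < (b.toEquiv ^ N y) (φf y) := by rw [hQN y]; exact (hrange y).1
        have hsplit : (b.toEquiv ^ N y) (φf x)
            = (b.toEquiv ^ (N y - N x)) ((b.toEquiv ^ N x) (φf x)) := by
          conv_rhs => rw [← perm_zpow_add]
          rw [show N y - N x + N x = N y by ring]
        have hle1 : (b.toEquiv ^ (N y - N x)) ((b.toEquiv ^ N x) (φf x))
            ≤ (b.toEquiv ^ (N y - N x)) 0 := by
          apply (perm_zpow_strictMono b.toEquiv hbS _).monotone
          rw [hQN x]; exact (hrange x).2
        have hle2 : (b.toEquiv ^ (N y - N x)) 0 ≤ b0 := by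
          have h1 : (b.toEquiv ^ (1:ℤ)) (0:ℝ) = b0 := by rw [zpow_one]; rfl
          calc (b.toEquiv ^ (N y - N x)) 0 ≤ (b.toEquiv ^ (1:ℤ)) 0 :=
                (orbit_strictAnti b hb 0).antitone (by omega)
            _ = b0 := h1
        rw [hsplit]
        calc (b.toEquiv ^ (N y - N x)) ((b.toEquiv ^ N x) (φf x))
            ≤ (b.toEquiv ^ (N y - N x)) 0 := hle1
          _ ≤ b0 := hle2
          _ < (b.toEquiv ^ N y) (φf y) := hRHS
      exact (perm_zpow_strictMono b.toEquiv hbS (N y)).lt_iff_lt.mp key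
  -- surjectivity of φf
  have hφsurj : Function.Surjective φf := by
    intro y
    set x : ℝ := (a.toEquiv ^ (-M y)) (B ((b.toEquiv ^ M y) y)) with hx
    have hPx : (a.toEquiv ^ M y) x = B ((b.toEquiv ^ M y) y) :=
      perm_zpow_cancel a.toEquiv (M y) _
    have hylow : b0 < (b.toEquiv ^ M y) y := by
      have h1 : (b.toEquiv ^ (M y - 1 + 1)) y = b ((b.toEquiv ^ (M y - 1)) y) :=
        perm_zpow_succ b _ _
      rw [show M y - 1 + 1 = M y by ring] at h1
      rw [h1, hb0]
      exact b.strictMono (hM2 y)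
    have hBy1 : (a.toEquiv ^ M y) x ≤ 0 := by
      rw [hPx, ← hB0]
      exact hBmono.le_iff_le.mpr (hM1 y)
    have hBy2 : a0 < (a.toEquiv ^ M y) x := by
      rw [hPx, ← hBb0]
      exact hBmono hylow
    have hNx : N x = M y := by
      apply hNuniq
      · exact hBy1
      · have hsucc : (a.toEquiv ^ (M y - 1 + 1)) x = a ((a.toEquiv ^ (M y - 1)) x) :=
          perm_zpow_succ a _ _
        rw [show M y - 1 + 1 = M y by ring] at hsucc
        have : a 0 < a ((a.toEquiv ^ (M y - 1)) x) := by
          rw [← hsucc, ← ha0]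
          exact hBy2
        exact a.strictMono.lt_iff_lt.mp this
    refine ⟨x, ?_⟩
    dsimp only [φf]
    rw [hNx, hPx, hAB]
    exact perm_zpow_cancel' b.toEquiv (M y) y
  exact ⟨StrictMono.orderIsoOfSurjective φf hφmono hφsurj, hequiv⟩

namespace CommutatorProof

abbrev K := ↥(Icc (0:ℝ) 1)
abbrev J := ↥(Ioo (0:ℝ) 1)

instance : Fact ((0:ℝ) ≤ 1) := ⟨zero_le_one⟩

lemma K_bot_val : ((⊥ : K) : ℝ) = 0 := rfl
lemma K_top_val : ((⊤ : K) : ℝ) = 1 := rfl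

/-- The affine iso from `Ioo (-1) 1` to `Ioo 0 1`. -/
def halfIso : ↥(Ioo (-1:ℝ) 1) ≃o J :=
  StrictMono.orderIsoOfSurjective
    (fun t => ⟨(t.1 + 1) / 2, ⟨by have := t.2.1; linarith, by have := t.2.2; linarith⟩⟩)
    (fun u v huv => by
      have h : u.1 < v.1 := huv
      exact Subtype.mk_lt_mk.mpr (by linarith))
    (fun y => ⟨⟨2 * y.1 - 1, ⟨by have := y.2.1; linarith, by have := y.2.2; linarith⟩⟩, by
      apply Subtype.ext
      show (2 * y.1 - 1 + 1) / 2 = y.1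
      ring⟩)

/-- An order isomorphism from the open unit interval to `ℝ`. -/
def E : J ≃o ℝ := ((orderIsoIooNegOneOne ℝ).trans halfIso).symm

/-- Restriction of an endpoints-fixing order iso of `[0,1]` to `(0,1)`, as a map. -/
def restrFun (u : K ≃o K) (x : J) : J :=
  ⟨(u ⟨x.1, Ioo_subset_Icc_self x.2⟩ : K).1, by
    have h0 : (⊥ : K) < u ⟨x.1, Ioo_subset_Icc_self x.2⟩ := by
      rw [← u.map_bot]
      apply u.strictMono
      rw [← Subtype.coe_lt_coe, K_bot_val]
      exact x.2.1
    have h1 : u ⟨x.1, Ioo_subset_Icc_self x.2⟩ < (⊤ : K) := by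
      rw [← u.map_top]
      apply u.strictMono
      rw [← Subtype.coe_lt_coe, K_top_val]
      exact x.2.2
    rw [← Subtype.coe_lt_coe, K_bot_val] at h0
    rw [← Subtype.coe_lt_coe, K_top_val] at h1
    exact ⟨h0, h1⟩⟩

lemma restrFun_val (u : K ≃o K) (x : J) :
    (restrFun u x : ℝ) = (u ⟨x.1, Ioo_subset_Icc_self x.2⟩ : K).1 := rfl

/-- Restriction of an endpoints-fixing order iso of `[0,1]` to `(0,1)`. -/
def restr (u : K ≃o K) : J ≃o J where
  toFun := restrFun u
  invFun := restrFun u.symm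
  left_inv x := by
    apply Subtype.ext
    rw [restrFun_val]
    have h : (⟨(restrFun u x : ℝ), Ioo_subset_Icc_self (restrFun u x).2⟩ : K)
        = u ⟨x.1, Ioo_subset_Icc_self x.2⟩ := Subtype.ext rfl
    rw [h, u.symm_apply_apply]
  right_inv x := by
    apply Subtype.ext
    rw [restrFun_val]
    have h : (⟨(restrFun u.symm x : ℝ), Ioo_subset_Icc_self (restrFun u.symm x).2⟩ : K)
        = u.symm ⟨x.1, Ioo_subset_Icc_self x.2⟩ := Subtype.ext rfl
    rw [h, u.apply_symm_apply]
  map_rel_iff' {x y} := by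
    show restrFun u x ≤ restrFun u y ↔ x ≤ y
    rw [← Subtype.coe_le_coe, restrFun_val, restrFun_val, Subtype.coe_le_coe, u.le_iff_le,
      ← Subtype.coe_le_coe]
    exact Subtype.coe_le_coe

lemma restr_apply_val (u : K ≃o K) (x : J) :
    ((restr u) x : ℝ) = (u ⟨x.1, Ioo_subset_Icc_self x.2⟩ : K).1 := rfl

end CommutatorProof

namespace CommutatorProof

lemma K_cases (k : K) : (k : ℝ) = 0 ∨ (0 < (k : ℝ) ∧ (k : ℝ) < 1) ∨ (k : ℝ) = 1 := by
  rcases k.2 with ⟨h0, h1⟩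
  rcases eq_or_lt_of_le h0 with he | he
  · exact Or.inl he.symm
  · rcases eq_or_lt_of_le h1 with he' | he'
    · exact Or.inr (Or.inr he')
    · exact Or.inr (Or.inl ⟨he, he'⟩)

lemma interior_preserved (u : K ≃o K) (k : K) (hk : 0 < (k : ℝ) ∧ (k : ℝ) < 1) :
    0 < (u k : ℝ) ∧ (u k : ℝ) < 1 := by
  have h0 : (⊥ : K) < u k := by
    rw [← u.map_bot]
    apply u.strictMono
    rw [← Subtype.coe_lt_coe, K_bot_val]
    exact hk.1
  have h1 : u k < (⊤ : K) := by
    rw [← u.map_top]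
    apply u.strictMono
    rw [← Subtype.coe_lt_coe, K_top_val]
    exact hk.2
  rw [← Subtype.coe_lt_coe, K_bot_val] at h0
  rw [← Subtype.coe_lt_coe, K_top_val] at h1
  exact ⟨h0, h1⟩

/-- Extension of an order iso of `(0,1)` to `[0,1]` by the identity on endpoints. -/
def extFun (φ : J ≃o J) (k : K) : K :=
  if hk : 0 < (k : ℝ) ∧ (k : ℝ) < 1 then
    ⟨(φ ⟨k.1, hk⟩ : J).1, Ioo_subset_Icc_self (φ ⟨k.1, hk⟩).2⟩
  else k

lemma extFun_interior (φ : J ≃o J) (k : K) (hk : 0 < (k : ℝ) ∧ (k : ℝ) < 1) :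
    extFun φ k = ⟨(φ ⟨k.1, hk⟩ : J).1, Ioo_subset_Icc_self (φ ⟨k.1, hk⟩).2⟩ :=
  dif_pos hk

lemma extFun_boundary (φ : J ≃o J) (k : K) (hk : ¬(0 < (k : ℝ) ∧ (k : ℝ) < 1)) :
    extFun φ k = k := dif_neg hk

lemma extFun_interior_val (φ : J ≃o J) (k : K) (hk : 0 < (k : ℝ) ∧ (k : ℝ) < 1) :
    (extFun φ k : ℝ) = (φ ⟨k.1, hk⟩ : J).1 := by rw [extFun_interior φ k hk]

lemma extFun_strictMono (φ : J ≃o J) : StrictMono (extFun φ) := by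
  intro x y hxy
  have hxy' : (x : ℝ) < (y : ℝ) := Subtype.coe_lt_coe.mpr hxy
  rw [← Subtype.coe_lt_coe]
  rcases K_cases x with hx | hx | hx
  · rw [extFun_boundary φ x (by rw [hx]; simp), hx]
    rcases K_cases y with hy | hy | hy
    · rw [hx, hy] at hxy'; linarith
    · rw [extFun_interior_val φ y hy]
      exact (φ ⟨y.1, hy⟩).2.1
    · rw [extFun_boundary φ y (by rw [hy]; simp), hy]; norm_num
  · rcases K_cases y with hy | hy | hy
    · rw [hy] at hxy'; linarith [hx.1]
    · rw [extFun_interior_val φ x hx, extFun_interior_val φ y hy]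
      exact Subtype.coe_lt_coe.mpr (φ.strictMono (Subtype.mk_lt_mk.mpr hxy'))
    · rw [extFun_boundary φ y (by rw [hy]; simp), hy, extFun_interior_val φ x hx]
      exact (φ ⟨x.1, hx⟩).2.2
  · have := y.2.2; rw [hx] at hxy'; linarith

lemma extFun_surjective (φ : J ≃o J) : Function.Surjective (extFun φ) := by
  intro y
  rcases K_cases y with hy | hy | hy
  · exact ⟨y, extFun_boundary φ y (by rw [hy]; simp)⟩
  · set z : J := φ.symm ⟨y.1, hy⟩ with hz
    refine ⟨⟨z.1, Ioo_subset_Icc_self z.2⟩, ?_⟩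
    rw [extFun_interior φ ⟨z.1, Ioo_subset_Icc_self z.2⟩ z.2]
    apply Subtype.ext
    show (φ ⟨z.1, z.2⟩ : J).1 = (y : ℝ)
    have h1 : (⟨z.1, z.2⟩ : J) = z := Subtype.ext rfl
    rw [h1, hz, φ.apply_symm_apply]
  · exact ⟨y, extFun_boundary φ y (by rw [hy]; simp)⟩

/-- Extension of an order iso of `(0,1)` to an order iso of `[0,1]`. -/
def extIso (φ : J ≃o J) : K ≃o K :=
  StrictMono.orderIsoOfSurjective (extFun φ) (extFun_strictMono φ) (extFun_surjective φ)

lemma extIso_apply (φ : J ≃o J) (k : K) : extIso φ k = extFun φ k := rfl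

lemma ext_conj (u w : K ≃o K) (φ : J ≃o J)
    (hc : ∀ x : J, φ (restr u x) = restr w (φ x)) (k : K) :
    extFun φ (u k) = w (extFun φ k) := by
  rcases K_cases k with hk | hk | hk
  · have hk' : k = (⊥ : K) := Subtype.ext hk
    rw [hk', u.map_bot, extFun_boundary φ ⊥ (by rw [K_bot_val]; simp), w.map_bot]
  · have hu := interior_preserved u k hk
    apply Subtype.ext
    rw [extFun_interior_val φ (u k) hu]
    have h1 : (⟨(u k : ℝ), hu⟩ : J) = restr u ⟨k.1, hk⟩ := by
      apply Subtype.ext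
      rw [restr_apply_val]
    calc (φ ⟨(u k : ℝ), hu⟩ : J).1 = (φ (restr u ⟨k.1, hk⟩) : J).1 := by rw [h1]
      _ = (restr w (φ ⟨k.1, hk⟩) : J).1 := by rw [hc]
      _ = (w ⟨(φ ⟨k.1, hk⟩ : J).1, Ioo_subset_Icc_self (φ ⟨k.1, hk⟩).2⟩ : K).1 :=
        restr_apply_val w _
      _ = (w (extFun φ k) : K).1 := by rw [extFun_interior φ k hk]
  · have hk' : k = (⊤ : K) := Subtype.ext hk
    rw [hk', u.map_top, extFun_boundary φ ⊤ (by rw [K_top_val]; simp), w.map_top]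

lemma toReal_lt (u : K ≃o K) (hu : ∀ k : K, 0 < (k : ℝ) → (k : ℝ) < 1 → (u k : ℝ) < (k : ℝ)) :
    ∀ x : ℝ, ((E.symm.trans (restr u)).trans E) x < x := by
  intro x
  have hz : E (E.symm x) = x := E.apply_symm_apply x
  have hlt : restr u (E.symm x) < E.symm x := by
    rw [← Subtype.coe_lt_coe, restr_apply_val]
    exact hu ⟨(E.symm x).1, Ioo_subset_Icc_self (E.symm x).2⟩ (E.symm x).2.1 (E.symm x).2.2
  calc ((E.symm.trans (restr u)).trans E) x = E (restr u (E.symm x)) := rfl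
    _ < E (E.symm x) := E.strictMono hlt
    _ = x := hz

lemma pullback (u w : K ≃o K) (ψ : ℝ ≃o ℝ)
    (hψ : ∀ x, ψ (((E.symm.trans (restr u)).trans E) x)
      = ((E.symm.trans (restr w)).trans E) (ψ x)) :
    ∀ x : J, ((E.trans ψ).trans E.symm) (restr u x)
      = restr w (((E.trans ψ).trans E.symm) x) := by
  intro x
  have h1 : E (restr u x) = ((E.symm.trans (restr u)).trans E) (E x) := by
    show E (restr u x) = E (restr u (E.symm (E x)))
    rw [E.symm_apply_apply]
  show E.symm (ψ (E (restr u x))) = restr w (E.symm (ψ (E x)))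
  rw [h1, hψ (E x)]
  show E.symm (E (restr w (E.symm (ψ (E x))))) = _
  rw [E.symm_apply_apply]

end CommutatorProof

open CommutatorProof

/-- The point `0` of the unit interval `[0,1]`. -/
noncomputable def I0 : Icc (0:ℝ) 1 := ⟨0, by norm_num⟩

/-- The point `1` of the unit interval `[0,1]`. -/
noncomputable def I1 : Icc (0:ℝ) 1 := ⟨1, by norm_num⟩

/-- An orientation-preserving homeomorphism of `[0,1]` is a self-homeomorphism
fixing both endpoints. -/
def OrientationPreserving (h : Homeomorph (Icc (0:ℝ) 1) (Icc (0:ℝ) 1)) : Prop :=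
  h I0 = I0 ∧ h I1 = I1

/-- every orientation-preserving homeomorphism of `[0,1]` is a single
commutator `g₁ g₂ g₁⁻¹ g₂⁻¹` of orientation-preserving homeomorphisms of `[0,1]`. -/
theorem orientation_preserving_homeo_is_commutator
    (h : Homeomorph (Icc (0:ℝ) 1) (Icc (0:ℝ) 1)) (hh : OrientationPreserving h) :
    ∃ g₁ g₂ : Homeomorph (Icc (0:ℝ) 1) (Icc (0:ℝ) 1),
      OrientationPreserving g₁ ∧ OrientationPreserving g₂ ∧
      ∀ x, h x = g₁ (g₂ (g₁.symm (g₂.symm x))) := by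
  obtain ⟨h0, h1⟩ := hh
  have hI0bot : I0 = (⊥ : K) := Subtype.ext rfl
  have hI1top : I1 = (⊤ : K) := Subtype.ext rfl
  rw [hI0bot] at h0
  rw [hI1top] at h1
  -- `h` is strictly monotone
  have hmono : StrictMono ⇑h :=
    h.continuous.strictMono_of_inj_boundedOrder (by rw [h0, h1]; exact bot_le) h.injective
  have hsymm0 : h.symm (⊥ : K) = ⊥ := by
    conv_lhs => rw [← h0]
    rw [h.symm_apply_apply]
  have hsymm1 : h.symm (⊤ : K) = ⊤ := by
    conv_lhs => rw [← h1]
    rw [h.symm_apply_apply]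
  have hsymmmono : StrictMono ⇑h.symm := by
    intro x y hxy
    have hiff := hmono.lt_iff_lt (a := h.symm x) (b := h.symm y)
    rw [h.apply_symm_apply, h.apply_symm_apply] at hiff
    exact hiff.mp hxy
  set hO : K ≃o K := StrictMono.orderIsoOfSurjective ⇑h hmono h.surjective with hOdef
  have hOapp : ∀ k : K, hO k = h k := fun k => rfl
  -- the "pushing down" map g
  set gfun : K → K := fun k =>
    ⟨(k : ℝ) * ((h.symm k : K) : ℝ), by
      have h1k := k.2
      have h2k := (h.symm k : K).2
      constructor
      · exact mul_nonneg h1k.1 h2k.1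
      · calc (k : ℝ) * ((h.symm k : K) : ℝ) ≤ 1 * 1 :=
            mul_le_mul h1k.2 h2k.2 h2k.1 (by norm_num)
          _ = 1 := by norm_num⟩ with hgfun
  have hgval : ∀ k : K, (gfun k : ℝ) = (k : ℝ) * ((h.symm k : K) : ℝ) := fun k => rfl
  have hg_mono : StrictMono gfun := by
    intro x y hxy
    have hxy' : (x : ℝ) < (y : ℝ) := Subtype.coe_lt_coe.mpr hxy
    have hsle : ((h.symm x : K) : ℝ) ≤ ((h.symm y : K) : ℝ) :=
      Subtype.coe_le_coe.mpr (hsymmmono.monotone hxy.le)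
    have hsy : (0 : ℝ) < ((h.symm y : K) : ℝ) := by
      have hb : (⊥ : K) < y := lt_of_le_of_lt bot_le hxy
      have := hsymmmono hb
      rw [hsymm0] at this
      have := Subtype.coe_lt_coe.mpr this
      rwa [K_bot_val] at this
    rw [← Subtype.coe_lt_coe, hgval, hgval]
    have hx0 : (0:ℝ) ≤ (x : ℝ) := x.2.1
    nlinarith
  have hg_cont : Continuous gfun := by
    apply Continuous.subtype_mk
    exact continuous_subtype_val.mul (continuous_subtype_val.comp h.symm.continuous)
  have hg_bot : gfun ⊥ = ⊥ := by
    apply Subtype.ext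
    rw [hgval, K_bot_val]
    simp
  have hg_top : gfun ⊤ = ⊤ := by
    apply Subtype.ext
    rw [hgval, hsymm1, K_top_val]
    simp
  have hg_surj : Function.Surjective gfun := by
    haveI : PreconnectedSpace K := Subtype.preconnectedSpace isPreconnected_Icc
    intro y
    have hsub := intermediate_value_univ (⊥ : K) (⊤ : K) hg_cont
    rw [hg_bot, hg_top] at hsub
    exact hsub ⟨bot_le, le_top⟩
  set gO : K ≃o K := StrictMono.orderIsoOfSurjective gfun hg_mono hg_surj with gOdef
  have gOapp : ∀ k : K, gO k = gfun k := fun k => rfl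
  -- interior strict inequalities
  have hgin : ∀ k : K, 0 < (k : ℝ) → (k : ℝ) < 1 → (gO k : ℝ) < (k : ℝ) := by
    intro k hk0 hk1
    rw [gOapp, hgval]
    have hs1 : ((h.symm k : K) : ℝ) < 1 := by
      have hk : k < (⊤ : K) := by
        rw [← Subtype.coe_lt_coe, K_top_val]; exact hk1
      have := hsymmmono hk
      rw [hsymm1] at this
      have := Subtype.coe_lt_coe.mpr this
      rwa [K_top_val] at this
    nlinarith [(h.symm k : K).2.1]
  have hgsmall : ∀ k : K, 0 < (k : ℝ) → (k : ℝ) < 1 → gO k < h.symm k := by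
    intro k hk0 hk1
    rw [← Subtype.coe_lt_coe, gOapp, hgval]
    have hs0 : (0:ℝ) < ((h.symm k : K) : ℝ) := by
      have hk : (⊥ : K) < k := by
        rw [← Subtype.coe_lt_coe, K_bot_val]; exact hk0
      have := hsymmmono hk
      rw [hsymm0] at this
      have := Subtype.coe_lt_coe.mpr this
      rwa [K_bot_val] at this
    nlinarith
  set fO : K ≃o K := gO.trans hO with fOdef
  have fOapp : ∀ k : K, fO k = h (gO k) := fun k => rfl
  have hfin : ∀ k : K, 0 < (k : ℝ) → (k : ℝ) < 1 → (fO k : ℝ) < (k : ℝ) := by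
    intro k hk0 hk1
    have := hmono (hgsmall k hk0 hk1)
    rw [h.apply_symm_apply] at this
    rw [fOapp]
    exact Subtype.coe_lt_coe.mpr this
  -- transfer to ℝ and apply the conjugacy theorem
  set aR : ℝ ≃o ℝ := (E.symm.trans (restr gO)).trans E with aRdef
  set bR : ℝ ≃o ℝ := (E.symm.trans (restr fO)).trans E with bRdef
  obtain ⟨ψ, hψ⟩ := exists_conj aR bR (toReal_lt gO hgin) (toReal_lt fO hfin)
  set φJ : J ≃o J := (E.trans ψ).trans E.symm with φJdef
  have hφJ : ∀ x : J, φJ (restr gO x) = restr fO (φJ x) := pullback gO fO ψ hψ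
  set Φ : K ≃o K := extIso φJ with Φdef
  have hconj : ∀ k : K, Φ (gO k) = fO (Φ k) := fun k => ext_conj gO fO φJ hφJ k
  -- assemble the commutator
  refine ⟨Φ.toHomeomorph, gO.toHomeomorph, ?_, ?_, ?_⟩
  · constructor
    · rw [hI0bot]
      show Φ (⊥ : K) = ⊥
      exact Φ.map_bot
    · rw [hI1top]
      show Φ (⊤ : K) = ⊤
      exact Φ.map_top
  · constructor
    · rw [hI0bot]
      show gO (⊥ : K) = ⊥
      exact gO.map_bot
    · rw [hI1top]
      show gO (⊤ : K) = ⊤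
      exact gO.map_top
  · intro x
    simp only [OrderIso.coe_toHomeomorph, OrderIso.coe_toHomeomorph_symm]
    have hc := hconj (Φ.symm (gO.symm x))
    rw [Φ.apply_symm_apply] at hc
    have hf : fO (gO.symm x) = h (gO (gO.symm x)) := fOapp _
    rw [gO.apply_symm_apply] at hf
    rw [hf] at hc
    exact hc.symm
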